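/- Suppose (X,d,μ) is a doubling metric measure space such that (X,d) is connected and L-annularly connected for some L ≥ 1. Then (X,d) satisfies the chain condition. -/

import Mathlib

open MeasureTheory Metric Set Filter Topology ENNReal

noncomputable section

/-- Every (open) ball has positive and finite measure. -/
def BallsPosFinite {X : Type*} [MetricSpace X] [MeasurableSpace X]
    (μ : Measure X) : Prop :=
  ∀ (x : X) (r : ℝ), 0 < r → 0 < μ (ball x r) ∧ μ (ball x r) < ⊤

/-- `μ` is doubling with constant `Cμ`. -/
def DoublingWith {X : Type*} [MetricSpace X] [MeasurableSpace X]
    (μ : Measure X) (Cμ : ℝ≥0∞) : Prop :=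
  ∀ (x : X) (r : ℝ), 0 < r → μ (ball x (2 * r)) ≤ Cμ * μ (ball x r)

/-- `μ` is a doubling measure. -/
def Doubling {X : Type*} [MetricSpace X] [MeasurableSpace X]
    (μ : Measure X) : Prop :=
  ∃ Cμ : ℝ≥0∞, 1 ≤ Cμ ∧ Cμ < ⊤ ∧ DoublingWith μ Cμ

/-- Relative lower volume decay with exponent `Q` and constant `C`:
`(s/r)^Q ≤ C · μ(B(x,s))/μ(B(a,r))` whenever `x ∈ B(a,r)` and `0 < s ≤ r`. -/
def LowerVolume {X : Type*} [MetricSpace X] [MeasurableSpace X]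
    (μ : Measure X) (Q C : ℝ) : Prop :=
  ∀ (a x : X) (r s : ℝ), x ∈ ball a r → 0 < s → s ≤ r →
    ENNReal.ofReal ((s / r) ^ Q) ≤ ENNReal.ofReal C * (μ (ball x s) / μ (ball a r))

/-- `(X,d,μ)` is `Q`-doubling: `μ` is doubling and the relative lower volume
decay `(s/r)^Q ≤ C μ(B(x,s))/μ(B(a,r))` holds for some constant `C ≥ 1`. -/
def QDoubling {X : Type*} [MetricSpace X] [MeasurableSpace X]
    (μ : Measure X) (Q : ℝ) : Prop :=
  Doubling μ ∧ ∃ C : ℝ, 1 ≤ C ∧ LowerVolume μ Q C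

/-- The pair `(u,g)` satisfies the `p`-Poincaré inequality with constants `C` and `lam`:
for every ball `B`, `⨍_B |u - u_B| dμ ≤ C diam(B) (⨍_{lam B} g^p dμ)^{1/p}`. -/
def PoincarePair {X : Type*} [MetricSpace X] [MeasurableSpace X]
    (μ : Measure X) (u g : X → ℝ) (p C lam : ℝ) : Prop :=
  ∀ (x : X) (r : ℝ), 0 < r →
    ⨍ y in ball x r, |u y - ⨍ z in ball x r, u z ∂μ| ∂μ ≤
      C * diam (ball x r) * (⨍ y in ball x (lam * r), g y ^ p ∂μ) ^ (1 / p)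

/-- A chain of balls `B_i = B(c i, s i)` associated with the point `x` and
radius `r`, with parameters `lam, M, m`. -/
def IsBallChain {X : Type*} [MetricSpace X] (lam M m : ℝ) (x : X) (r : ℝ)
    (c : ℕ → X) (s : ℕ → ℝ) : Prop :=
  (∀ i, 0 < s i) ∧
  -- (1) `B_0 ⊆ X \ B(x,r)`
  ball (c 0) (s 0) ⊆ (ball x r)ᶜ ∧
  -- (2) `M⁻¹ diam(B_i) ≤ dist(x,B_i) ≤ M diam(B_i)`
  (∀ i, M⁻¹ * diam (ball (c i) (s i)) ≤ infDist x (ball (c i) (s i)) ∧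
      infDist x (ball (c i) (s i)) ≤ M * diam (ball (c i) (s i))) ∧
  -- (3) `dist(x,B_i) ≤ M r 2^{-m i}`
  (∀ i : ℕ, infDist x (ball (c i) (s i)) ≤ M * r * (2 : ℝ) ^ (-(m * i))) ∧
  -- (4) there is a ball `D_i ⊆ B_i ∩ B_{i+1}` with `B_i ∪ B_{i+1} ⊆ M D_i`
  (∀ i : ℕ, ∃ (y : X) (t : ℝ), 0 < t ∧
      ball y t ⊆ ball (c i) (s i) ∩ ball (c (i + 1)) (s (i + 1)) ∧
      ball (c i) (s i) ∪ ball (c (i + 1)) (s (i + 1)) ⊆ ball y (M * t)) ∧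
  -- (5) no point of `X` belongs to more than `M` balls `lam B_i`
  (∀ y : X, {i : ℕ | y ∈ ball (c i) (lam * s i)}.Finite ∧
      ({i : ℕ | y ∈ ball (c i) (lam * s i)}.ncard : ℝ) ≤ M)

/-- `X` satisfies the chain condition: for every `lam ≥ 1` there are constants
`M ≥ 1`, `0 < m ≤ 1` such that for each `x ∈ X` and all `0 < r < diam(X)/8`
there is a chain of balls associated with `x, r`. -/
def ChainCondition (X : Type*) [MetricSpace X] : Prop :=
  ∀ lam : ℝ, 1 ≤ lam → ∃ M m : ℝ, 1 ≤ M ∧ 0 < m ∧ m ≤ 1 ∧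
    ∀ (x : X) (r : ℝ), 0 < r →
      ENNReal.ofReal r < EMetric.diam (Set.univ : Set X) / 8 →
      ∃ (c : ℕ → X) (s : ℕ → ℝ), IsBallChain lam M m x r c s

/-- The gauge function `h(t) = (log(1/t))^p` (as a function on `ℝ≥0∞`). -/
def hGauge (p : ℝ) : ℝ≥0∞ → ℝ≥0∞ :=
  fun t => ENNReal.ofReal (Real.log (1 / t.toReal) ^ p)

/-- The generalized Hausdorff measure with gauge function `h(t) = (log(1/t))^p`. -/
def hausdorffH {X : Type*} [MetricSpace X] [MeasurableSpace X] [BorelSpace X]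
    (p : ℝ) : Measure X :=
  Measure.mkMetric (hGauge p)

/-- `X` is `L`-annularly connected: whenever `y, z` lie in the annulus
`A(x,r,2r) = closedBall(x,2r) \ ball(x,r)`, there is a curve joining `y` to `z`
whose image lies in `A(x, r/L, 2rL)`. -/
def AnnularlyConnected (X : Type*) [MetricSpace X] (L : ℝ) : Prop :=
  ∀ (x : X) (r : ℝ), 0 < r →
    ∀ y ∈ closedBall x (2 * r) \ ball x r, ∀ z ∈ closedBall x (2 * r) \ ball x r,
      ∃ (γ : ℝ → X) (a b : ℝ), a ≤ b ∧ ContinuousOn γ (Set.Icc a b) ∧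
        γ a = y ∧ γ b = z ∧
        γ '' Set.Icc a b ⊆ closedBall x (2 * r * L) \ ball x (r / L)

namespace ChainAux
variable {X : Type*} [MetricSpace X]

lemma le_infDist' (x : X) (s : Set X) (b : ℝ) (hs : s.Nonempty)
    (h : ∀ y ∈ s, b ≤ dist x y) : b ≤ infDist x s := by
  by_contra hlt
  obtain ⟨y, hy, hd⟩ := (infDist_lt_iff hs).mp (not_le.mp hlt)
  exact absurd (h y hy) (not_le.mpr hd)

/-- IVT for distance in a connected space. -/
lemma ivt [ConnectedSpace X] (x z : X) {t : ℝ} (h0 : 0 ≤ t) (hz : t ≤ dist x z) :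
    ∃ p : X, dist x p = t := by
  have h := (isPreconnected_univ (α := X)).intermediate_value (a := x) (b := z)
    (mem_univ x) (mem_univ z) (f := fun w => dist x w) (Continuous.continuousOn (continuous_const.dist continuous_id))
  have : t ∈ Icc (dist x x) (dist x z) := by simp [h0, hz]
  obtain ⟨p, -, hp⟩ := h this
  exact ⟨p, hp⟩

/-- lower bound for the diameter of a ball, given a far point. -/
lemma diam_ball_ge [ConnectedSpace X] (c x : X) {s : ℝ} (hs : 0 < s) (hfar : s ≤ dist c x) :
    s ≤ diam (ball c s) := by
  have key : ∀ t, 0 ≤ t → t < s → t ≤ diam (ball c s) := by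
    intro t ht hts
    obtain ⟨p, hp⟩ := ivt c x ht (hts.le.trans hfar)
    have hpball : p ∈ ball c s := by simpa [mem_ball, dist_comm, hp]
    have := dist_le_diam_of_mem isBounded_ball (mem_ball_self hs) hpball
    simpa [hp] using this
  by_contra hlt
  push_neg at hlt
  have hd0 : 0 ≤ diam (ball c s) := diam_nonneg
  have h1 : (diam (ball c s) + s)/2 < s := by linarith
  have h2 := key ((diam (ball c s) + s)/2) (by linarith) h1
  linarith

/-- ε-chains exist in preconnected sets. -/
lemma eps_chain {K : Set X} (hK : IsPreconnected K) {p p' : X} (hp : p ∈ K) (hp' : p' ∈ K)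
    {ε : ℝ} (hε : 0 < ε) :
    ∃ (n : ℕ) (q : ℕ → X), q 0 = p ∧ q n = p' ∧ (∀ j, q j ∈ K) ∧
      ∀ j < n, dist (q j) (q (j+1)) ≤ ε := by
  set S : Set X := {z | z ∈ K ∧ ∃ (n : ℕ) (q : ℕ → X), q 0 = p ∧ q n = z ∧ (∀ j, q j ∈ K) ∧
      ∀ j < n, dist (q j) (q (j+1)) ≤ ε} with hS
  have hpS : p ∈ S := ⟨hp, 0, fun _ => p, rfl, rfl, fun _ => hp, by omega⟩
  have hext : ∀ z ∈ S, ∀ w ∈ K, dist w z < ε → w ∈ S := by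
    rintro z ⟨hzK, n, q, hq0, hqn, hqK, hqd⟩ w hwK hd
    refine ⟨hwK, n+1, fun j => if j ≤ n then q j else w, by simp [hq0], by simp, ?_, ?_⟩
    · intro j; dsimp only; split <;> [exact hqK j; exact hwK]
    · intro j hj
      rcases Nat.lt_or_ge j n with h | h
      · simpa [Nat.le_of_lt h, Nat.succ_le_of_lt h] using hqd j h
      · have hjn : j = n := by omega
        subst hjn
        simp only [le_refl, if_pos, Nat.lt_irrefl]
        rw [if_neg (by omega)]
        rw [hqn, dist_comm]; exact hd.le
  by_contra hcon
  push_neg at hcon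
  have hp'S : p' ∉ S := by
    intro h
    obtain ⟨-, n, q, h0, hn, hK', hd⟩ := h
    obtain ⟨j, hj, hj2⟩ := hcon n q h0 hn hK'
    exact absurd (hd j hj) (not_le.mpr hj2)
  set U : Set X := ⋃ z ∈ S, ball z ε with hU
  set V : Set X := ⋃ z ∈ K \ S, ball z ε with hV
  have hUopen : IsOpen U := isOpen_biUnion fun _ _ => isOpen_ball
  have hVopen : IsOpen V := isOpen_biUnion fun _ _ => isOpen_ball
  have hcover : K ⊆ U ∪ V := by
    intro z hz
    by_cases h : z ∈ S
    · exact Or.inl (mem_biUnion h (mem_ball_self hε))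
    · exact Or.inr (mem_biUnion ⟨hz, h⟩ (mem_ball_self hε))
  have h1 : (K ∩ U).Nonempty := ⟨p, hp, mem_biUnion hpS (mem_ball_self hε)⟩
  have h2 : (K ∩ V).Nonempty := ⟨p', hp', mem_biUnion ⟨hp', hp'S⟩ (mem_ball_self hε)⟩
  obtain ⟨w, hwK, hwU, hwV⟩ := hK U V hUopen hVopen hcover h1 h2
  obtain ⟨z, hzS, hwz⟩ := mem_iUnion₂.mp hwU
  obtain ⟨z', hz'KS, hwz'⟩ := mem_iUnion₂.mp hwV
  have hwS : w ∈ S := hext z hzS w hwK (by simpa [dist_comm] using mem_ball.mp hwz)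
  have : z' ∈ S := hext w hwS z' hz'KS.1 (by simpa [dist_comm] using mem_ball.mp hwz')
  exact hz'KS.2 this

end ChainAux

namespace ChainAux2
variable {X : Type*} [MetricSpace X]

/-- prune an ε-chain to a separated ε-chain. -/
lemma prune {K : Set X} {p p' : X} {ε : ℝ} (hε : 0 < ε)
    (n : ℕ) (q : ℕ → X) (hq0 : q 0 = p) (hqn : q n = p') (hqK : ∀ j, q j ∈ K)
    (hqd : ∀ j < n, dist (q j) (q (j+1)) ≤ ε) :
    ∃ (N : ℕ) (Q : ℕ → X), Q 0 = p ∧ Q N = p' ∧ (∀ j, Q j ∈ K) ∧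
      (∀ j < N, dist (Q j) (Q (j+1)) ≤ ε) ∧
      (∀ a b, a + 2 ≤ b → b ≤ N → ε < dist (Q a) (Q b)) := by
  classical
  let f : ℕ → ℕ := fun m => Nat.rec 0
    (fun _ fm => Nat.findGreatest (fun j => dist (q fm) (q j) ≤ ε) n) m
  have hf0 : f 0 = 0 := rfl
  have hfs : ∀ m, f (m+1) = Nat.findGreatest (fun j => dist (q (f m)) (q j) ≤ ε) n := fun m => rfl
  have hle : ∀ m, f m ≤ n := by
    intro m; cases m with
    | zero => exact Nat.zero_le n
    | succ m => rw [hfs]; exact Nat.findGreatest_le n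
  have hself : ∀ m, dist (q (f m)) (q (f m)) ≤ ε := fun m => by simp [hε.le]
  have hspec : ∀ m, dist (q (f m)) (q (f (m+1))) ≤ ε := by
    intro m; rw [hfs m]; exact Nat.findGreatest_spec (P := fun j => dist (q (f m)) (q j) ≤ ε) (hle m) (hself m)
  have hmono1 : ∀ m, f m ≤ f (m+1) := by
    intro m; rw [hfs m]; exact Nat.le_findGreatest (P := fun j => dist (q (f m)) (q j) ≤ ε) (hle m) (hself m)
  have hmono : Monotone f := monotone_nat_of_le_succ hmono1
  have hstep : ∀ m, f m < n → f m + 1 ≤ f (m+1) := by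
    intro m hm; rw [hfs m]
    exact Nat.le_findGreatest hm (hqd (f m) hm)
  have hmax : ∀ m j, f (m+1) < j → j ≤ n → ε < dist (q (f m)) (q j) := by
    intro m j h1 h2
    have := Nat.findGreatest_is_greatest (P := fun j => dist (q (f m)) (q j) ≤ ε)
      (by rw [hfs m] at h1; exact h1) h2
    exact not_le.mp this
  have hhit : ∃ m, f m = n := by
    have key : ∀ m, m ≤ f m ∨ f m = n := by
      intro m; induction m with
      | zero => exact Or.inl (Nat.zero_le _)
      | succ m ih =>
        rcases Nat.lt_or_ge (f m) n with h | h
        · rcases ih with ih | ih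
          · exact Or.inl (by have := hstep m h; omega)
          · omega
        · have hfm : f m = n := le_antisymm (hle m) h
          have : n ≤ f (m+1) := by
            rw [hfs m, hfm]
            exact Nat.le_findGreatest (P := fun j => dist (q n) (q j) ≤ ε) (le_refl n) (by simp [hε.le])
          exact Or.inr (le_antisymm (hle (m+1)) this)
    rcases key n with h | h
    · exact ⟨n, le_antisymm (hle n) h⟩
    · exact ⟨n, h⟩
  have inst : DecidablePred (fun m => f m = n) := fun m => instDecidableEqNat _ _
  set N := @Nat.find (fun m => f m = n) inst hhit with hN
  have hfN : f N = n := @Nat.find_spec (fun m => f m = n) inst hhit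
  have hNmin : ∀ m, m < N → f m ≠ n := fun m hm => @Nat.find_min (fun m => f m = n) inst hhit m hm
  refine ⟨N, fun m => q (f m), by simp only []; rw [hf0, hq0], by simp only []; rw [hfN, hqn], fun j => hqK _,
    fun j _ => hspec j, ?_⟩
  intro a b hab hbN
  have ha1 : a + 1 < N := lt_of_lt_of_le (Nat.lt_of_succ_le hab) hbN
  have h1 : f (a+1) < n := lt_of_le_of_ne (hle (a+1)) (hNmin _ ha1)
  have h2 : f (a+1) + 1 ≤ f (a+1+1) := hstep (a+1) h1
  have h2b : f (a+1+1) = f (a+2) := rfl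
  rw [h2b] at h2
  have h3 : f (a+2) ≤ f b := hmono hab
  exact hmax a (f b) (lt_of_lt_of_le (Nat.lt_of_succ_le h2) h3) (hle b)

variable [MeasurableSpace X] [BorelSpace X]

lemma doubling_iter (μ : Measure X) {Cμ : ℝ≥0∞} (hd : ∀ (x : X) (r : ℝ), 0 < r → μ (ball x (2 * r)) ≤ Cμ * μ (ball x r))
    (κ : ℕ) (z : X) {t : ℝ} (ht : 0 < t) :
    μ (ball z (2^κ * t)) ≤ Cμ^κ * μ (ball z t) := by
  induction κ with
  | zero => simp
  | succ κ ih =>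
    have h1 : (2:ℝ)^(κ+1) * t = 2 * (2^κ * t) := by ring
    rw [h1]
    calc μ (ball z (2 * (2^κ * t))) ≤ Cμ * μ (ball z (2^κ * t)) :=
          hd z _ (by positivity)
      _ ≤ Cμ * (Cμ^κ * μ (ball z t)) := by exact mul_le_mul_right ih _
      _ = Cμ^(κ+1) * μ (ball z t) := by ring

/-- packing lemma. -/
lemma packing (μ : Measure X) (hballs : ∀ (x : X) (r : ℝ), 0 < r → 0 < μ (ball x r) ∧ μ (ball x r) < ⊤)
    {Cμ : ℝ≥0∞} (hd : ∀ (x : X) (r : ℝ), 0 < r → μ (ball x (2 * r)) ≤ Cμ * μ (ball x r))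
    (κ P : ℕ) (hP : Cμ^κ ≤ (P : ℝ≥0∞))
    (y : X) (R ρ : ℝ) (hρ : 0 < ρ) (hR : 0 ≤ R) (hratio : 4*R + 2*ρ ≤ 2^κ * ρ)
    (n : ℕ) (z : ℕ → X) (hz : ∀ i < n, z i ∈ closedBall y R)
    (hsep : ∀ i < n, ∀ j < n, i ≠ j → ρ ≤ dist (z i) (z j)) : n ≤ P := by
  have hB0 := hballs y (R + ρ) (by linarith)
  set B0 := μ (ball y (R + ρ)) with hB0def
  have hkey : ∀ i < n, B0 ≤ Cμ^κ * μ (ball (z i) (ρ/2)) := by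
    intro i hi
    have hsub : ball y (R + ρ) ⊆ ball (z i) (2^κ * (ρ/2)) := by
      intro w hw
      have h1 : dist w y < R + ρ := mem_ball.mp hw
      have h2 : dist (z i) y ≤ R := mem_closedBall.mp (hz i hi)
      have : dist w (z i) < 2*R + ρ := by
        calc dist w (z i) ≤ dist w y + dist y (z i) := dist_triangle _ _ _
          _ < R + ρ + R := by rw [dist_comm y (z i)]; linarith
          _ = 2*R + ρ := by ring
      exact mem_ball.mpr (lt_of_lt_of_le this (by linarith))
    calc B0 ≤ μ (ball (z i) (2^κ * (ρ/2))) := measure_mono hsub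
      _ ≤ Cμ^κ * μ (ball (z i) (ρ/2)) := doubling_iter μ hd κ _ (by linarith)
  have hdisj : (Finset.range n : Set ℕ).PairwiseDisjoint (fun i => ball (z i) (ρ/2)) := by
    intro i hi j hj hij
    simp only [Finset.coe_range, mem_Iio] at hi hj
    refine Set.disjoint_left.mpr fun w hwi hwj => ?_
    have h1 : dist w (z i) < ρ/2 := mem_ball.mp hwi
    have h2 : dist w (z j) < ρ/2 := mem_ball.mp hwj
    have : dist (z i) (z j) < ρ := by
      calc dist (z i) (z j) ≤ dist (z i) w + dist w (z j) := dist_triangle _ _ _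
        _ < ρ/2 + ρ/2 := by rw [dist_comm (z i) w]; linarith
        _ = ρ := by ring
    exact absurd (hsep i hi j hj hij) (not_le.mpr this)
  have hsubU : (⋃ i ∈ Finset.range n, ball (z i) (ρ/2)) ⊆ ball y (R + ρ) := by
    intro w hw
    obtain ⟨i, hi, hwi⟩ := mem_iUnion₂.mp hw
    simp only [Finset.mem_range] at hi
    have h1 : dist w (z i) < ρ/2 := mem_ball.mp hwi
    have h2 : dist (z i) y ≤ R := mem_closedBall.mp (hz i hi)
    exact mem_ball.mpr (by calc dist w y ≤ dist w (z i) + dist (z i) y := dist_triangle _ _ _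
      _ < R + ρ := by linarith)
  have hunion : μ (⋃ i ∈ Finset.range n, ball (z i) (ρ/2)) = ∑ i ∈ Finset.range n, μ (ball (z i) (ρ/2)) :=
    measure_biUnion_finset hdisj (fun i _ => measurableSet_ball)
  have hmain : (n : ℝ≥0∞) * B0 ≤ (P : ℝ≥0∞) * B0 := by
    calc (n : ℝ≥0∞) * B0 = ∑ _i ∈ Finset.range n, B0 := by
          simp [Finset.sum_const, nsmul_eq_mul]
      _ ≤ ∑ i ∈ Finset.range n, Cμ^κ * μ (ball (z i) (ρ/2)) :=
          Finset.sum_le_sum (fun i hi => hkey i (Finset.mem_range.mp hi))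
      _ = Cμ^κ * ∑ i ∈ Finset.range n, μ (ball (z i) (ρ/2)) := by
          rw [Finset.mul_sum]
      _ = Cμ^κ * μ (⋃ i ∈ Finset.range n, ball (z i) (ρ/2)) := by rw [hunion]
      _ ≤ Cμ^κ * B0 := mul_le_mul_right (measure_mono hsubU) _
      _ ≤ (P : ℝ≥0∞) * B0 := mul_le_mul_left hP _
  have := (ENNReal.mul_le_mul_iff_left (ne_of_gt hB0.1) (ne_of_lt hB0.2)).mp hmain
  exact_mod_cast this

end ChainAux2

set_option maxHeartbeats 1000000 in
/-- If `(X,d,μ)` is a doubling metric measure space and `(X,d)` is connected and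
`L`-annularly connected, then `(X,d)` satisfies the chain condition. -/
theorem chainCondition_of_annularlyConnected
    {X : Type*} [MetricSpace X] [MeasurableSpace X] [BorelSpace X]
    (μ : Measure X) (hballs : BallsPosFinite μ) (hdoub : Doubling μ)
    (hconn : ConnectedSpace X)
    (L : ℝ) (hL : 1 ≤ L) (hann : AnnularlyConnected X L) :
    ChainCondition X := by
  classical
  have hL0 : (0:ℝ) < L := lt_of_lt_of_le one_pos hL
  intro lam hlam
  have hlam0 : (0:ℝ) < lam := lt_of_lt_of_le one_pos hlam
  obtain ⟨Cmu, hC1, hCt, hdbl⟩ := hdoub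
  obtain ⟨κ, hκ⟩ : ∃ κ : ℕ, (130*lam*L^2 : ℝ) < 2^κ := pow_unbounded_of_one_lt _ one_lt_two
  obtain ⟨P, hP⟩ : ∃ P : ℕ, Cmu^κ < P := ENNReal.exists_nat_gt (ENNReal.pow_ne_top hCt.ne)
  obtain ⟨K2, hK2⟩ : ∃ K2 : ℕ, (6*L^2 : ℝ) < 2^K2 := pow_unbounded_of_one_lt _ one_lt_two
  set B : ℕ := 2*P + 2 with hBdef
  have hBpos : 0 < B := by omega
  have hBr : (1:ℝ) ≤ (B:ℝ) := by exact_mod_cast hBpos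
  set M : ℝ := 16*lam*L^2 + 4*L + 6 + ((K2+1)*B : ℕ) with hMdef
  have hcastnn : (0:ℝ) ≤ (((K2+1)*B : ℕ) : ℝ) := Nat.cast_nonneg _
  have hM16 : 16*lam*L^2 ≤ M := by rw [hMdef]; nlinarith
  have hM4L : 4*L ≤ M := by rw [hMdef]; nlinarith
  have hM6 : (6:ℝ) ≤ M := by rw [hMdef]; nlinarith
  have hM1 : (1:ℝ) ≤ M := by linarith
  have hM0 : (0:ℝ) ≤ M := by linarith
  have hMK : (((K2+1)*B : ℕ) : ℝ) ≤ M := by rw [hMdef]; nlinarith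
  refine ⟨M, 1/(B:ℝ), hM1, by positivity, by rw [div_le_one (by positivity)]; exact hBr, ?_⟩
  intro x r hr hdiam
  -- a far point
  have h8 : ENNReal.ofReal r * 8 < EMetric.diam (Set.univ : Set X) :=
    (ENNReal.lt_div_iff_mul_lt (Or.inl (by norm_num)) (Or.inl (by norm_num))).mp hdiam
  obtain ⟨u, v, huv⟩ : ∃ u v : X, ENNReal.ofReal r * 8 < edist u v := by
    by_contra hcon
    push_neg at hcon
    exact absurd (EMetric.diam_le fun a _ b _ => hcon a b) (not_le.mpr h8)
  have hduv : 8 * r < dist u v := by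
    have h1 : ENNReal.ofReal (8*r) < ENNReal.ofReal (dist u v) := by
      rw [edist_dist] at huv
      calc ENNReal.ofReal (8*r) = ENNReal.ofReal r * 8 := by
            rw [ENNReal.ofReal_mul (by norm_num : (0:ℝ) ≤ 8)]
            rw [ENNReal.ofReal_ofNat, mul_comm]
        _ < ENNReal.ofReal (dist u v) := huv
    rw [ENNReal.ofReal_lt_ofReal_iff_of_nonneg (by linarith)] at h1
    exact h1
  obtain ⟨z, hz⟩ : ∃ z : X, 4 * r ≤ dist x z := by
    by_cases h : 4*r ≤ dist x u
    · exact ⟨u, h⟩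
    · push_neg at h
      refine ⟨v, ?_⟩
      have ht := dist_triangle u x v
      have hcx : dist u x = dist x u := dist_comm u x
      linarith
  -- the points p k with dist x (p k) = 2 * (r / 2^k)
  have hpow : ∀ k : ℕ, (0:ℝ) < 2^k := fun k => by positivity
  have hrk : ∀ k : ℕ, (0:ℝ) < r/2^k := fun k => by positivity
  have hδ : ∀ k : ℕ, (0:ℝ) < r/2^k/(8*lam*L) := fun k => by positivity
  have hp_ex : ∀ k : ℕ, ∃ q : X, dist x q = 2 * (r / 2^k) := by
    intro k
    apply ChainAux.ivt x z (by positivity)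
    have h2k : (1:ℝ) ≤ 2^k := one_le_pow₀ (by norm_num : (1:ℝ) ≤ 2)
    have : r/2^k ≤ r := by
      rw [div_le_iff₀ (hpow k)]
      nlinarith
    linarith
  choose p hp using hp_ex
  have hphalf : ∀ k : ℕ, dist x (p (k+1)) = r/2^k := by
    intro k
    rw [hp (k+1), pow_succ]
    field_simp
  -- the per-scale chains
  have hscale : ∀ k : ℕ, ∃ (Nk : ℕ) (Qk : ℕ → X), Nk + 1 ≤ B ∧ Qk 0 = p k ∧ Qk Nk = p (k+1) ∧
      (∀ j, Qk j ∈ closedBall x (2*(r/2^k)*L) \ ball x ((r/2^k)/L)) ∧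
      (∀ j < Nk, dist (Qk j) (Qk (j+1)) ≤ (r/2^k)/(8*lam*L)/2) := by
    intro k
    have hρk : (0:ℝ) < r/2^k := hrk k
    have hpk : p k ∈ closedBall x (2*(r/2^k)) \ ball x (r/2^k) := by
      constructor
      · rw [mem_closedBall, dist_comm, hp k]
      · rw [mem_ball, dist_comm, hp k]
        intro hcon
        linarith
    have hpk1 : p (k+1) ∈ closedBall x (2*(r/2^k)) \ ball x (r/2^k) := by
      constructor
      · rw [mem_closedBall, dist_comm, hphalf k]
        linarith
      · rw [mem_ball, dist_comm, hphalf k]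
        exact lt_irrefl _
    obtain ⟨γ, a, b, hab, hcont, hγa, hγb, himg⟩ := hann x (r/2^k) hρk _ hpk _ hpk1
    have hKconn : IsPreconnected (γ '' Icc a b) := isPreconnected_Icc.image γ hcont
    have hpkK : p k ∈ γ '' Icc a b := ⟨a, left_mem_Icc.mpr hab, hγa⟩
    have hpk1K : p (k+1) ∈ γ '' Icc a b := ⟨b, right_mem_Icc.mpr hab, hγb⟩
    have hε : (0:ℝ) < (r/2^k)/(8*lam*L)/2 := by positivity
    obtain ⟨n, q, hq0, hqn, hqK, hqd⟩ := ChainAux.eps_chain hKconn hpkK hpk1K hε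
    obtain ⟨Nk, Qk, hQQ0, hQQN, hQQK, hQQd, hQQsep⟩ :=
      ChainAux2.prune hε n q hq0 hqn hqK hqd
    have hmemA : ∀ j, Qk j ∈ closedBall x (2*(r/2^k)*L) \ ball x ((r/2^k)/L) :=
      fun j => himg (hQQK j)
    refine ⟨Nk, Qk, ?_, hQQ0, hQQN, hmemA, hQQd⟩
    by_contra hcon
    push_neg at hcon
    have hNk : 2*P + 2 ≤ Nk := by omega
    have hll : (1:ℝ) ≤ lam*L^2 := by nlinarith
    have hratio : 4*(2*(r/2^k)*L) + 2*((r/2^k)/(8*lam*L)/2) ≤ 2^κ * ((r/2^k)/(8*lam*L)/2) := by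
      have h1 : (0:ℝ) < 16*lam*L := by positivity
      rw [show (r/2^k)/(8*lam*L)/2 = (r/2^k)/(16*lam*L) from by ring]
      rw [show 4*(2*(r/2^k)*L) + 2*((r/2^k)/(16*lam*L)) = (r/2^k) * ((128*lam*L^2 + 2)/(16*lam*L)) from by
        field_simp
        ring]
      rw [show (2:ℝ)^κ * ((r/2^k)/(16*lam*L)) = (r/2^k) * (2^κ/(16*lam*L)) from by ring]
      apply mul_le_mul_of_nonneg_left _ hρk.le
      rw [div_le_div_iff_of_pos_right h1]
      nlinarith
    have hmemB : ∀ i < P+1, Qk (2*i) ∈ closedBall x (2*(r/2^k)*L) := fun i _ => (hmemA (2*i)).1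
    have hsep' : ∀ i < P+1, ∀ j < P+1, i ≠ j →
        (r/2^k)/(8*lam*L)/2 ≤ dist (Qk (2*i)) (Qk (2*j)) := by
      intro i hi j hj hij
      rcases Nat.lt_or_ge i j with h | h
      · have h1 : 2*i + 2 ≤ 2*j := by omega
        have h2 : 2*j ≤ Nk := by omega
        exact (hQQsep (2*i) (2*j) h1 h2).le
      · have hji : j < i := by omega
        have h1 : 2*j + 2 ≤ 2*i := by omega
        have h2 : 2*i ≤ Nk := by omega
        rw [dist_comm]
        exact (hQQsep (2*j) (2*i) h1 h2).le
    have hpack : P + 1 ≤ P := ChainAux2.packing μ hballs hdbl κ P hP.le x (2*(r/2^k)*L)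
      ((r/2^k)/(8*lam*L)/2) hε (by positivity) hratio (P+1) (fun i => Qk (2*i)) hmemB hsep'
    omega
  choose N Q hNle hQ0 hQN hQmem hQd using hscale
  have hdlow : ∀ k j, (r/2^k)/L ≤ dist x (Q k j) := by
    intro k j
    have h := (hQmem k j).2
    rw [mem_ball] at h
    push_neg at h
    rwa [dist_comm] at h
  have hdhigh : ∀ k j, dist x (Q k j) ≤ 2*(r/2^k)*L := by
    intro k j
    have h := (hQmem k j).1
    rw [mem_closedBall] at h
    rwa [dist_comm] at h
  have hkidx : ∀ i : ℕ, i < (i/B + 1) * B := by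
    intro i
    have h1 := Nat.div_add_mod i B
    have h2 := Nat.mod_lt i hBpos
    nlinarith [h1, h2]
  set c : ℕ → X := fun i => Q (i/B) (min (i % B) (N (i/B))) with hcdef
  set s : ℕ → ℝ := fun i => (r/2^(i/B))/(8*lam*L) with hsdef
  have hci : ∀ i, c i = Q (i/B) (min (i % B) (N (i/B))) := fun i => rfl
  have hsi : ∀ i, s i = (r/2^(i/B))/(8*lam*L) := fun i => rfl
  refine ⟨c, s, ?_⟩
  unfold IsBallChain
  refine ⟨fun i => by rw [hsi]; exact hδ _, ?_, ?_, ?_, ?_, ?_⟩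
  · -- (1)
    intro w hw
    have hc0 : c 0 = p 0 := by
      rw [hci 0, Nat.zero_div, Nat.zero_mod, min_eq_left (Nat.zero_le _)]
      exact hQ0 0
    have hs0 : s 0 = r/(8*lam*L) := by rw [hsi 0, Nat.zero_div, pow_zero, div_one]
    rw [hc0, hs0] at hw
    simp only [mem_compl_iff, mem_ball, not_lt]
    have h1 : dist x (p 0) = 2*r := by
      have := hp 0
      rw [pow_zero, div_one] at this
      exact this
    have h2 : dist x (p 0) ≤ dist x w + dist w (p 0) := dist_triangle _ _ _
    have h3 : dist w (p 0) < r/(8*lam*L) := mem_ball.mp hw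
    have h4 : r/(8*lam*L) ≤ r/8 := div_le_div_of_nonneg_left hr.le (by norm_num) (by nlinarith)
    have h5 : dist x w = dist w x := dist_comm x w
    linarith
  · -- (2)
    intro i
    have hkpos := hrk (i/B)
    have hδk := hδ (i/B)
    have hlo := hdlow (i/B) (min (i%B) (N (i/B)))
    have hhi := hdhigh (i/B) (min (i%B) (N (i/B)))
    have hcc : c i = Q (i/B) (min (i%B) (N (i/B))) := hci i
    have hss : s i = (r/2^(i/B))/(8*lam*L) := hsi i
    rw [hcc, hss]
    set k := i/B with hkd
    set w0 := Q k (min (i%B) (N k)) with hw0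
    have hfar : (r/2^k)/(8*lam*L) ≤ dist w0 x := by
      rw [dist_comm]
      refine le_trans ?_ hlo
      exact div_le_div_of_nonneg_left hkpos.le hL0 (by nlinarith)
    have hdlb := ChainAux.diam_ball_ge w0 x hδk hfar
    have hdub : diam (ball w0 ((r/2^k)/(8*lam*L))) ≤ 2*((r/2^k)/(8*lam*L)) :=
      diam_ball hδk.le
    have hiub : infDist x (ball w0 ((r/2^k)/(8*lam*L))) ≤ dist x w0 :=
      infDist_le_dist_of_mem (mem_ball_self hδk)
    have hilb : (r/2^k)/(2*L) ≤ infDist x (ball w0 ((r/2^k)/(8*lam*L))) := by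
      apply ChainAux.le_infDist' x _ _ ⟨_, mem_ball_self hδk⟩
      intro w hw
      have h1 : dist w w0 < (r/2^k)/(8*lam*L) := mem_ball.mp hw
      have h2 : dist x w0 ≤ dist x w + dist w w0 := dist_triangle _ _ _
      have h3 : (r/2^k)/(8*lam*L) ≤ (r/2^k)/(2*L) :=
        div_le_div_of_nonneg_left hkpos.le (by positivity) (by nlinarith)
      have h4 : (r/2^k)/L = (r/2^k)/(2*L) + (r/2^k)/(2*L) := by ring
      linarith
    constructor
    · have ha : M⁻¹ * diam (ball w0 ((r/2^k)/(8*lam*L))) ≤ diam (ball w0 ((r/2^k)/(8*lam*L))) :=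
        mul_le_of_le_one_left diam_nonneg (inv_le_one_of_one_le₀ hM1)
      have hb : 2*((r/2^k)/(8*lam*L)) ≤ (r/2^k)/(2*L) := by
        rw [show 2*((r/2^k)/(8*lam*L)) = (r/2^k)/(4*lam*L) from by ring]
        exact div_le_div_of_nonneg_left hkpos.le (by positivity) (by nlinarith)
      linarith
    · have he2 : 16*lam*L^2*((r/2^k)/(8*lam*L)) = 2*(r/2^k)*L := by
        field_simp
        ring
      have hc2 : 16*lam*L^2*((r/2^k)/(8*lam*L)) ≤ M*((r/2^k)/(8*lam*L)) :=
        mul_le_mul_of_nonneg_right hM16 hδk.le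
      have hc3 : M*((r/2^k)/(8*lam*L)) ≤ M*diam (ball w0 ((r/2^k)/(8*lam*L))) :=
        mul_le_mul_of_nonneg_left hdlb hM0
      linarith
  · -- (3)
    intro i
    have hcc : c i = Q (i/B) (min (i%B) (N (i/B))) := hci i
    have hss : s i = (r/2^(i/B))/(8*lam*L) := hsi i
    rw [hcc, hss]
    set k := i/B with hkd
    have hδk := hδ k
    have hiub : infDist x (ball (Q k (min (i%B) (N k))) ((r/2^k)/(8*lam*L))) ≤ 2*(r/2^k)*L :=
      le_trans (infDist_le_dist_of_mem (mem_ball_self hδk)) (hdhigh k _)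
    have hBR : (0:ℝ) < (B:ℝ) := by exact_mod_cast hBpos
    have hik : (i:ℝ) < ((k:ℝ)+1)*(B:ℝ) := by exact_mod_cast hkidx i
    have hmi : 1/(B:ℝ)*(i:ℝ) ≤ (k:ℝ)+1 := by
      rw [div_mul_eq_mul_div, one_mul, div_le_iff₀ hBR]
      linarith
    have hrpow : ((2:ℝ)^(k+1:ℕ))⁻¹ ≤ (2:ℝ)^(-(1/(B:ℝ)*(i:ℝ))) := by
      have h2 : (2:ℝ)^(-(((k:ℝ)+1))) ≤ (2:ℝ)^(-(1/(B:ℝ)*(i:ℝ))) :=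
        Real.rpow_le_rpow_of_exponent_le one_le_two (by linarith)
      calc ((2:ℝ)^(k+1:ℕ))⁻¹ = (2:ℝ)^(-(((k:ℝ)+1))) := by
            rw [Real.rpow_neg (by norm_num : (0:ℝ) ≤ 2),
              show ((k:ℝ)+1) = ((k+1:ℕ):ℝ) by push_cast; ring, Real.rpow_natCast]
        _ ≤ _ := h2
    have hmid : 2*(r/2^k)*L ≤ M * r * ((2:ℝ)^(k+1:ℕ))⁻¹ := by
      rw [show ((2:ℝ)^(k+1:ℕ))⁻¹ = 1/(2*2^k) from by rw [pow_succ]; ring]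
      rw [show 2*(r/2^k)*L = (4*L*r)*(1/(2*2^k)) from by
        field_simp
        ring]
      rw [show M*r*(1/(2*2^k)) = (M*r)*(1/(2*2^k)) from by ring]
      apply mul_le_mul_of_nonneg_right _ (by positivity)
      nlinarith
    have hfin : M * r * ((2:ℝ)^(k+1:ℕ))⁻¹ ≤ M * r * (2:ℝ)^(-(1/(B:ℝ)*(i:ℝ))) :=
      mul_le_mul_of_nonneg_left hrpow (mul_nonneg hM0 hr.le)
    linarith
  · -- (4)
    intro i
    have hjB : i % B < B := Nat.mod_lt i hBpos
    have hiB : B*(i/B) + i%B = i := Nat.div_add_mod i B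
    have hNleB := hNle (i/B)
    have hEq : i+1 = B*(i/B) + (i%B+1) := by
      conv_lhs => rw [← hiB]
      exact Nat.add_assoc _ _ _
    rcases Nat.lt_or_ge (i % B) (B-1) with hcase | hcase
    · -- inside a block
      have hsucc : i%B + 1 < B := Nat.add_lt_of_lt_sub hcase
      have hdiv : (i+1)/B = i/B := by
        rw [hEq, Nat.mul_add_div hBpos, Nat.div_eq_of_lt hsucc, Nat.add_zero]
      have hmod : (i+1) % B = i%B + 1 := by
        rw [hEq, Nat.mul_add_mod, Nat.mod_eq_of_lt hsucc]
      set k := i/B with hkd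
      have hδk := hδ k
      have hd12 : dist (c i) (c (i+1)) ≤ (r/2^k)/(8*lam*L)/2 := by
        rw [hci i, hci (i+1), hdiv, hmod]
        rcases Nat.lt_or_ge (i%B) (N k) with h | h
        · rw [min_eq_left h.le, min_eq_left (Nat.succ_le_of_lt h)]
          exact hQd k (i%B) h
        · rw [min_eq_right h, min_eq_right (h.trans (Nat.le_succ _))]
          simp only [← hkd, dist_self]
          positivity
      have hsii : s i = (r/2^k)/(8*lam*L) := hsi i
      have hsiq : s (i+1) = (r/2^k)/(8*lam*L) := by rw [hsi (i+1), hdiv]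
      refine ⟨c i, (r/2^k)/(8*lam*L)/4, by positivity, ?_, ?_⟩
      · intro w hw
        have h1 : dist w (c i) < (r/2^k)/(8*lam*L)/4 := mem_ball.mp hw
        constructor
        · rw [mem_ball, hsii]
          linarith
        · rw [mem_ball, hsiq]
          have ht := dist_triangle w (c i) (c (i+1))
          linarith
      · intro w hw
        rw [mem_ball]
        have hMδ := mul_le_mul_of_nonneg_right hM6 hδk.le
        rcases hw with hw | hw
        · have h1 : dist w (c i) < s i := mem_ball.mp hw
          rw [hsii] at h1
          linarith
        · have h1 : dist w (c (i+1)) < s (i+1) := mem_ball.mp hw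
          rw [hsiq] at h1
          have h2 : dist w (c i) ≤ dist w (c (i+1)) + dist (c (i+1)) (c i) := dist_triangle _ _ _
          have h3 : dist (c (i+1)) (c i) = dist (c i) (c (i+1)) := dist_comm _ _
          linarith
    · -- junction between blocks
      have hjeq : i % B = B - 1 := (Nat.le_antisymm hcase (Nat.le_pred_of_lt hjB)).symm
      have hi1 : i + 1 = B*(i/B+1) := by
        have h2 : B*(i/B+1) = B*(i/B) + B := by ring
        rw [h2]
        conv_lhs => rw [← hiB]
        rw [hjeq, Nat.add_assoc, Nat.sub_add_cancel hBpos]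
      have hdiv : (i+1)/B = i/B+1 := by rw [hi1]; exact Nat.mul_div_cancel_left _ hBpos
      have hmod : (i+1) % B = 0 := by rw [hi1]; exact Nat.mul_mod_right B _
      set k := i/B with hkd
      have hc1 : c i = p (k+1) := by
        rw [hci i, min_eq_right (show N k ≤ i % B by rw [hjeq]; exact Nat.le_pred_of_lt hNleB)]
        exact hQN k
      have hc2 : c (i+1) = p (k+1) := by
        rw [hci (i+1), hdiv, hmod, min_eq_left (Nat.zero_le _)]
        exact hQ0 (k+1)
      have hsii : s i = (r/2^k)/(8*lam*L) := hsi i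
      have hsiq : s (i+1) = (r/2^k)/(8*lam*L)/2 := by
        rw [hsi (i+1), hdiv, pow_succ]
        ring
      have hδk := hδ k
      refine ⟨p (k+1), (r/2^k)/(8*lam*L)/2, by positivity, ?_, ?_⟩
      · intro w hw
        have h1 : dist w (p (k+1)) < (r/2^k)/(8*lam*L)/2 := mem_ball.mp hw
        constructor
        · rw [mem_ball, hc1, hsii]
          linarith
        · rw [mem_ball, hc2, hsiq]
          exact h1
      · intro w hw
        rw [mem_ball]
        have hMδ := mul_le_mul_of_nonneg_right hM6 hδk.le
        rcases hw with hw | hw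
        · have h1 : dist w (c i) < s i := mem_ball.mp hw
          rw [hsii, hc1] at h1
          linarith
        · have h1 : dist w (c (i+1)) < s (i+1) := mem_ball.mp hw
          rw [hsiq, hc2] at h1
          linarith
  · -- (5)
    intro y
    have hest : ∀ i, y ∈ ball (c i) (lam * s i) →
        r/2^(i/B) ≤ 2*L*dist x y ∧ dist x y * 2^(i/B) ≤ 3*L*r := by
      intro i hi
      have hρ0 := hrk (i/B)
      have hy : dist y (c i) < lam*((r/2^(i/B))/(8*lam*L)) := by
        have h := mem_ball.mp hi
        rwa [hsi i] at h
      have he : lam*((r/2^(i/B))/(8*lam*L)) = (r/2^(i/B))/(8*L) := by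
        field_simp
      rw [he] at hy
      have hlo := hdlow (i/B) (min (i%B) (N (i/B)))
      have hhi := hdhigh (i/B) (min (i%B) (N (i/B)))
      rw [← hci i] at hlo hhi
      have ht1 : dist x (c i) ≤ dist x y + dist y (c i) := dist_triangle _ _ _
      have ht2 : dist x y ≤ dist x (c i) + dist y (c i) := by
        have h := dist_triangle x (c i) y
        have h2 : dist (c i) y = dist y (c i) := dist_comm _ _
        linarith
      constructor
      · have h5 : (r/2^(i/B))/(2*L) ≤ dist x y := by
          have e2 : (r/2^(i/B))/L = 8*((r/2^(i/B))/(8*L)) := by ring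
          have e3 : (r/2^(i/B))/(2*L) = 4*((r/2^(i/B))/(8*L)) := by ring
          linarith
        rw [div_le_iff₀ (by positivity : (0:ℝ) < 2*L)] at h5
        rw [mul_comm] at h5
        exact h5
      · have h6 : dist x y ≤ 3*L*(r/2^(i/B)) := by
          have e4 : (r/2^(i/B))/(8*L) ≤ (r/2^(i/B)) := by
            rw [div_le_iff₀ (by positivity : (0:ℝ) < 8*L)]
            nlinarith
          have e5 : 2*(r/2^(i/B))*L + (r/2^(i/B)) ≤ 3*L*(r/2^(i/B)) := by nlinarith
          linarith
        have h7 := mul_le_mul_of_nonneg_right h6 (hpow (i/B)).le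
        have e6 : 3*L*(r/2^(i/B))*2^(i/B) = 3*L*r := by
          field_simp
        linarith
    set S := {i : ℕ | y ∈ ball (c i) (lam * s i)} with hSdef
    rcases eq_empty_or_nonempty S with hSe | hne
    · exact ⟨by rw [hSe]; exact Set.finite_empty, by rw [hSe]; simpa using hM0⟩
    obtain ⟨i₀, hi₀⟩ := hne
    have hd0 : 0 < dist x y := by
      have h1 := (hest i₀ hi₀).1
      have h2 := hrk (i₀/B)
      nlinarith
    have hfind : ∃ k : ℕ, r ≤ 2^k*(2*L*dist x y) := by
      obtain ⟨k, hk⟩ := pow_unbounded_of_one_lt (r/(2*L*dist x y)) one_lt_two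
      refine ⟨k, ?_⟩
      rw [div_lt_iff₀ (by positivity : (0:ℝ) < 2*L*dist x y)] at hk
      nlinarith
    have inst2 : DecidablePred (fun k : ℕ => r ≤ 2^k*(2*L*dist x y)) :=
      fun k => Classical.propDecidable _
    have hk₁spec : r ≤ 2^(@Nat.find _ inst2 hfind)*(2*L*dist x y) := @Nat.find_spec _ inst2 hfind
    set k₁ := @Nat.find _ inst2 hfind with hk₁def
    have hsub : S ⊆ Set.Ico (k₁*B) ((k₁+K2+1)*B) := by
      intro i hi
      have h1 := (hest i hi).1
      have h2 := (hest i hi).2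
      have hk1le : k₁ ≤ i/B := by
        have h1' : r ≤ 2*L*dist x y * 2^(i/B) := by
          rw [div_le_iff₀ (hpow (i/B))] at h1
          exact h1
        rw [mul_comm] at h1'
        exact @Nat.find_min' _ inst2 hfind (i/B) h1'
      have hkup : i/B ≤ k₁ + K2 := by
        by_contra hcon2
        push_neg at hcon2
        have e1 : (2:ℝ)^(k₁+K2) < 2^(i/B) := pow_lt_pow_right₀ one_lt_two hcon2
        have c2 : 3*L*r ≤ 3*L*((2:ℝ)^k₁*(2*L*dist x y)) :=
          mul_le_mul_of_nonneg_left hk₁spec (by positivity)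
        have c3 : 3*L*((2:ℝ)^k₁*(2*L*dist x y)) = (6*L^2)*((2:ℝ)^k₁*dist x y) := by ring
        have c4 : (6*L^2)*((2:ℝ)^k₁*dist x y) < 2^K2*((2:ℝ)^k₁*dist x y) :=
          mul_lt_mul_of_pos_right hK2 (by positivity)
        have c5 : (2:ℝ)^K2*((2:ℝ)^k₁*dist x y) = 2^(k₁+K2)*dist x y := by
          rw [pow_add]
          ring
        have c6 : (2:ℝ)^(k₁+K2)*dist x y < 2^(i/B)*dist x y :=
          mul_lt_mul_of_pos_right e1 hd0
        have c7 : (2:ℝ)^(i/B)*dist x y = dist x y * 2^(i/B) := mul_comm _ _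
        linarith
      rw [Set.mem_Ico]
      constructor
      · calc k₁*B ≤ (i/B)*B := Nat.mul_le_mul_right B hk1le
          _ ≤ i := Nat.div_mul_le_self i B
      · calc i < (i/B+1)*B := hkidx i
          _ ≤ (k₁+K2+1)*B := Nat.mul_le_mul_right B (Nat.succ_le_succ hkup)
    have hfin : S.Finite := (Set.finite_Ico _ _).subset hsub
    refine ⟨hfin, ?_⟩
    have hcard : S.ncard ≤ (Set.Ico (k₁*B) ((k₁+K2+1)*B)).ncard :=
      Set.ncard_le_ncard hsub (Set.finite_Ico _ _)
    have hico : (Set.Ico (k₁*B) ((k₁+K2+1)*B)).ncard = (k₁+K2+1)*B - k₁*B := by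
      rw [show (Set.Ico (k₁*B) ((k₁+K2+1)*B)) = ↑(Finset.Ico (k₁*B) ((k₁+K2+1)*B)) from
        (Finset.coe_Ico _ _).symm, Set.ncard_coe_finset, Nat.card_Ico]
    have hfinal : S.ncard ≤ (K2+1)*B := by
      rw [hico] at hcard
      have he7 : (k₁+K2+1)*B = k₁*B + (K2+1)*B := by ring
      rw [he7, Nat.add_sub_cancel_left] at hcard
      exact hcard
    calc (S.ncard : ℝ) ≤ (((K2+1)*B : ℕ) : ℝ) := by exact_mod_cast hfinal
      _ ≤ M := hMK
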